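/- Set A := Ry(π/4), and on three qubits set CNOT₂₃ := I₂⊗CNOT and CNOT₁₃ := |0⟩⟨0|⊗I₄ + |1⟩⟨1|⊗(I₂⊗σx). Let Δ be the 8×8 diagonal matrix with diagonal entries (1,1,−1,1,1,1,1,1) (i.e. Δ sends the basis vector |010⟩ to its negative and fixes all other standard basis vectors). Then the Toffoli gate Toffoli := I₈ + (|1⟩⟨1|⊗|1⟩⟨1|)⊗(σx − I₂) satisfies Δ·Toffoli = (I₂⊗I₂⊗A) · CNOT₁₃ · (I₂⊗I₂⊗A) · CNOT₂₃ · (I₂⊗I₂⊗A†) · CNOT₁₃ · (I₂⊗I₂⊗A†). -/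
import Mathlib


open Matrix Complex Kronecker

/-- The rotation matrix about the y-axis of the Bloch sphere. -/
noncomputable def Ry (θ : ℝ) : Matrix (Fin 2) (Fin 2) ℂ :=
  !![(Real.cos (θ / 2) : ℂ), -(Real.sin (θ / 2) : ℂ);
     (Real.sin (θ / 2) : ℂ), (Real.cos (θ / 2) : ℂ)]

/-- The NOT gate `σx`. -/
def σx : Matrix (Fin 2) (Fin 2) ℂ := !![0, 1; 1, 0]

/-- The projector `|0⟩⟨0|`. -/
def P0 : Matrix (Fin 2) (Fin 2) ℂ := !![1, 0; 0, 0]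

/-- The projector `|1⟩⟨1|`. -/
def P1 : Matrix (Fin 2) (Fin 2) ℂ := !![0, 0; 0, 1]

/-- The CNOT gate `|0⟩⟨0|⊗I₂ + |1⟩⟨1|⊗σx`. -/
def CNOT : Matrix (Fin 2 × Fin 2) (Fin 2 × Fin 2) ℂ :=
  P0 ⊗ₖ (1 : Matrix (Fin 2) (Fin 2) ℂ) + P1 ⊗ₖ σx

noncomputable def A : Matrix (Fin 2) (Fin 2) ℂ := Ry (Real.pi / 4)

/-- CNOT on qubits 2,3 of three qubits, i.e. `I₂ ⊗ CNOT`. -/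
def CNOT₂₃ : Matrix ((Fin 2 × Fin 2) × Fin 2) ((Fin 2 × Fin 2) × Fin 2) ℂ :=
  ((1 : Matrix (Fin 2) (Fin 2) ℂ) ⊗ₖ P0) ⊗ₖ (1 : Matrix (Fin 2) (Fin 2) ℂ)
    + ((1 : Matrix (Fin 2) (Fin 2) ℂ) ⊗ₖ P1) ⊗ₖ σx

/-- CNOT on qubits 1,3 of three qubits, i.e. `|0⟩⟨0|⊗I₄ + |1⟩⟨1|⊗(I₂⊗σx)`. -/
def CNOT₁₃ : Matrix ((Fin 2 × Fin 2) × Fin 2) ((Fin 2 × Fin 2) × Fin 2) ℂ :=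
  (P0 ⊗ₖ (1 : Matrix (Fin 2) (Fin 2) ℂ)) ⊗ₖ (1 : Matrix (Fin 2) (Fin 2) ℂ)
    + (P1 ⊗ₖ (1 : Matrix (Fin 2) (Fin 2) ℂ)) ⊗ₖ σx

/-- The Toffoli gate. -/
def Toffoli : Matrix ((Fin 2 × Fin 2) × Fin 2) ((Fin 2 × Fin 2) × Fin 2) ℂ :=
  1 + (P1 ⊗ₖ P1) ⊗ₖ (σx - 1)

/-- The diagonal gate sending `|010⟩` to `−|010⟩` and fixing the other
standard basis vectors. -/
def Δ : Matrix ((Fin 2 × Fin 2) × Fin 2) ((Fin 2 × Fin 2) × Fin 2) ℂ :=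
  Matrix.diagonal fun x =>
    if x = (((0 : Fin 2), (1 : Fin 2)), (0 : Fin 2)) then -1 else 1

def Z : Matrix (Fin 2) (Fin 2) ℂ := !![1, 0; 0, -1]

lemma trig1 : (Real.cos (Real.pi/4/2) : ℂ)^2 + (Real.sin (Real.pi/4/2) : ℂ)^2 = 1 := by
  exact_mod_cast Real.cos_sq_add_sin_sq (Real.pi/4/2)
lemma trig2 : (Real.cos (Real.pi/4/2) : ℂ)^2 - (Real.sin (Real.pi/4/2) : ℂ)^2
    = (Real.sqrt 2 : ℂ)/2 := by
  have h : Real.cos (Real.pi/4/2)^2 - Real.sin (Real.pi/4/2)^2 = Real.sqrt 2 / 2 := by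
    have := Real.cos_two_mul' (Real.pi/4/2)
    rw [show 2*(Real.pi/4/2) = Real.pi/4 by ring, Real.cos_pi_div_four] at this
    linarith
  exact_mod_cast h
lemma trig3 : 2 * (Real.sin (Real.pi/4/2) : ℂ) * (Real.cos (Real.pi/4/2) : ℂ)
    = (Real.sqrt 2 : ℂ)/2 := by
  have h : 2 * Real.sin (Real.pi/4/2) * Real.cos (Real.pi/4/2) = Real.sqrt 2 / 2 := by
    have := Real.sin_two_mul (Real.pi/4/2)
    rw [show 2*(Real.pi/4/2) = Real.pi/4 by ring, Real.sin_pi_div_four] at this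
    linarith
  exact_mod_cast h
lemma sqrt2_sq : (Real.sqrt 2 : ℂ)^2 = 2 := by
  exact_mod_cast Real.sq_sqrt (by norm_num : (2:ℝ) ≥ 0)

lemma hAH : Aᴴ = !![(Real.cos (Real.pi/4/2) : ℂ), (Real.sin (Real.pi/4/2) : ℂ);
     -(Real.sin (Real.pi/4/2) : ℂ), (Real.cos (Real.pi/4/2) : ℂ)] := by
  ext i j
  fin_cases i <;> fin_cases j <;>
    simp [A, Ry, Matrix.conjTranspose_apply, -Complex.ofReal_cos, -Complex.ofReal_sin, Complex.conj_ofReal]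

lemma hA1 : A * Aᴴ = 1 := by
  rw [hAH]
  ext i j
  fin_cases i <;> fin_cases j <;>
    simp [A, Ry, Matrix.mul_apply, Fin.sum_univ_two, Matrix.one_apply, -Complex.ofReal_cos, -Complex.ofReal_sin] <;>
    first
      | ring1
      | linear_combination trig1
      | linear_combination -trig1
      | linear_combination trig2
      | linear_combination -trig2
      | linear_combination (1)*trig3/2
      | linear_combination (-1)*trig3/2
      | linear_combination (2)*trig3/2
      | linear_combination (-2)*trig3/2
      | linear_combination (3)*trig3/2
      | linear_combination (-3)*trig3/2
      | linear_combination (4)*trig3/2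
      | linear_combination (-4)*trig3/2
lemma hA1' : Aᴴ * A = 1 := by
  rw [hAH]
  ext i j
  fin_cases i <;> fin_cases j <;>
    simp [A, Ry, Matrix.mul_apply, Fin.sum_univ_two, Matrix.one_apply, -Complex.ofReal_cos, -Complex.ofReal_sin] <;>
    first
      | ring1
      | linear_combination trig1
      | linear_combination -trig1
      | linear_combination trig2
      | linear_combination -trig2
      | linear_combination (1)*trig3/2
      | linear_combination (-1)*trig3/2
      | linear_combination (2)*trig3/2
      | linear_combination (-2)*trig3/2
      | linear_combination (3)*trig3/2
      | linear_combination (-3)*trig3/2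
      | linear_combination (4)*trig3/2
      | linear_combination (-4)*trig3/2

lemma hKX : A * σx * Aᴴ = ((Real.sqrt 2 : ℂ)/2) • (σx - Z) := by
  rw [hAH]
  ext i j
  fin_cases i <;> fin_cases j <;>
    simp [A, Ry, σx, Z, Matrix.mul_apply, Fin.sum_univ_two, -Complex.ofReal_cos, -Complex.ofReal_sin] <;>
    first
      | ring1
      | linear_combination trig1
      | linear_combination -trig1
      | linear_combination trig2
      | linear_combination -trig2
      | linear_combination (1)*trig3/2
      | linear_combination (-1)*trig3/2
      | linear_combination (2)*trig3/2
      | linear_combination (-2)*trig3/2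
      | linear_combination (3)*trig3/2
      | linear_combination (-3)*trig3/2
      | linear_combination (4)*trig3/2
      | linear_combination (-4)*trig3/2

lemma hKZ : A * Z * Aᴴ = ((Real.sqrt 2 : ℂ)/2) • (σx + Z) := by
  rw [hAH]
  ext i j
  fin_cases i <;> fin_cases j <;>
    simp [A, Ry, σx, Z, Matrix.mul_apply, Fin.sum_univ_two, -Complex.ofReal_cos, -Complex.ofReal_sin] <;>
    first
      | ring1
      | linear_combination trig1
      | linear_combination -trig1
      | linear_combination trig2
      | linear_combination -trig2
      | linear_combination (1)*trig3/2
      | linear_combination (-1)*trig3/2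
      | linear_combination (2)*trig3/2
      | linear_combination (-2)*trig3/2
      | linear_combination (3)*trig3/2
      | linear_combination (-3)*trig3/2
      | linear_combination (4)*trig3/2
      | linear_combination (-4)*trig3/2

lemma hmid1 : σx * (σx - Z) * σx = σx + Z := by
  ext i j; fin_cases i <;> fin_cases j <;>
    simp [σx, Z, Matrix.mul_apply, Fin.sum_univ_two]
lemma hsub : σx - Z + (σx + Z) = (2:ℂ) • σx := by module
lemma hσ2 : σx * σx = 1 := by
  ext i j; fin_cases i <;> fin_cases j <;>
    simp [σx, Matrix.mul_apply, Fin.sum_univ_two, Matrix.one_apply]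

lemma half : (Real.sqrt 2/2 : ℂ) * (Real.sqrt 2/2) = 1/2 := by
  linear_combination sqrt2_sq/4

lemma blk00 : A * A * Aᴴ * Aᴴ = 1 := by
  have h : A * A * Aᴴ * Aᴴ = A * (A * Aᴴ) * Aᴴ := by noncomm_ring
  rw [h, hA1, mul_one, hA1]

lemma blk01 : A * A * σx * Aᴴ * Aᴴ = -Z := by
  have h : A * A * σx * Aᴴ * Aᴴ = A * (A * σx * Aᴴ) * Aᴴ := by
    noncomm_ring
  rw [h, hKX, Matrix.mul_smul, Matrix.smul_mul, Matrix.mul_sub, Matrix.sub_mul, hKX, hKZ,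
    ← smul_sub, smul_smul, half]
  module

lemma blk10 : A * σx * A * Aᴴ * σx * Aᴴ = 1 := by
  have h : A * σx * A * Aᴴ * σx * Aᴴ = A * (σx * (A * Aᴴ) * σx) * Aᴴ := by
    noncomm_ring
  rw [h, hA1, mul_one, hσ2, mul_one, hA1]

lemma blk11 : A * σx * A * σx * Aᴴ * σx * Aᴴ = σx := by
  have h : A * σx * A * σx * Aᴴ * σx * Aᴴ = A * (σx * (A * σx * Aᴴ) * σx) * Aᴴ := by
    noncomm_ring
  rw [h, hKX, Matrix.mul_smul, Matrix.smul_mul, hmid1, Matrix.mul_smul, Matrix.smul_mul,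
    Matrix.mul_add, Matrix.add_mul, hKX, hKZ, ← smul_add, smul_smul, half]
  module

lemma hP00 : P0 * P0 = P0 := by
  ext i j; fin_cases i <;> fin_cases j <;> simp [P0, Matrix.mul_apply, Fin.sum_univ_two]
lemma hP01 : P0 * P1 = 0 := by
  ext i j; fin_cases i <;> fin_cases j <;> simp [P0, P1, Matrix.mul_apply, Fin.sum_univ_two]
lemma hP10 : P1 * P0 = 0 := by
  ext i j; fin_cases i <;> fin_cases j <;> simp [P0, P1, Matrix.mul_apply, Fin.sum_univ_two]
lemma hP11 : P1 * P1 = P1 := by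
  ext i j; fin_cases i <;> fin_cases j <;> simp [P1, Matrix.mul_apply, Fin.sum_univ_two]


lemma hT : Toffoli = (P0 ⊗ₖ P0) ⊗ₖ (1 : Matrix (Fin 2) (Fin 2) ℂ)
    + (P0 ⊗ₖ P1) ⊗ₖ (1 : Matrix (Fin 2) (Fin 2) ℂ)
    + (P1 ⊗ₖ P0) ⊗ₖ (1 : Matrix (Fin 2) (Fin 2) ℂ) + (P1 ⊗ₖ P1) ⊗ₖ σx := by
  ext ⟨⟨a,b⟩,c⟩ ⟨⟨d,e⟩,f⟩
  fin_cases a <;> fin_cases b <;> fin_cases c <;> fin_cases d <;> fin_cases e <;> fin_cases f <;>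
    simp [Toffoli, P0, P1, σx, Matrix.one_apply, Prod.ext_iff]

lemma hΔ : Δ = 1 - (2:ℂ) • ((P0 ⊗ₖ P1) ⊗ₖ P0) := by
  ext ⟨⟨a,b⟩,c⟩ ⟨⟨d,e⟩,f⟩
  fin_cases a <;> fin_cases b <;> fin_cases c <;> fin_cases d <;> fin_cases e <;> fin_cases f <;>
    simp [Δ, P0, P1, Matrix.diagonal_apply, Matrix.one_apply, Prod.ext_iff] <;> norm_num

lemma hZ1 : -Z = (1 : Matrix (Fin 2) (Fin 2) ℂ) + (-2:ℂ) • P0 := by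
  ext i j; fin_cases i <;> fin_cases j <;> simp [Z, P0, Matrix.one_apply] <;> norm_num

lemma hKT : ((P0 ⊗ₖ P1) ⊗ₖ P0) * Toffoli = (P0 ⊗ₖ P1) ⊗ₖ P0 := by
  rw [Toffoli, Matrix.mul_add, Matrix.mul_one, ← Matrix.mul_kronecker_mul,
    ← Matrix.mul_kronecker_mul, hP01, Matrix.zero_kronecker, Matrix.zero_kronecker, add_zero]

/-- A Toffoli gate, up to the diagonal gate `Δ`, can be performed with 3 CNOTs. -/
theorem toffoli_up_to_diagonal :
    Δ * Toffoli =
      ((1 : Matrix (Fin 2) (Fin 2) ℂ) ⊗ₖ (1 : Matrix (Fin 2) (Fin 2) ℂ)) ⊗ₖ A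
        * CNOT₁₃
        * ((1 : Matrix (Fin 2) (Fin 2) ℂ) ⊗ₖ (1 : Matrix (Fin 2) (Fin 2) ℂ)) ⊗ₖ A
        * CNOT₂₃
        * ((1 : Matrix (Fin 2) (Fin 2) ℂ) ⊗ₖ (1 : Matrix (Fin 2) (Fin 2) ℂ)) ⊗ₖ Aᴴ
        * CNOT₁₃
        * ((1 : Matrix (Fin 2) (Fin 2) ℂ) ⊗ₖ (1 : Matrix (Fin 2) (Fin 2) ℂ)) ⊗ₖ Aᴴ := by
  have key : Δ * Toffoli = Toffoli - (2:ℂ) • ((P0 ⊗ₖ P1) ⊗ₖ P0) := by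
    rw [hΔ, Matrix.sub_mul, Matrix.one_mul, Matrix.smul_mul, hKT]
  rw [key, hT]
  simp only [CNOT₁₃, CNOT₂₃, Matrix.mul_add, Matrix.add_mul, ← Matrix.mul_kronecker_mul,
    Matrix.one_mul, Matrix.mul_one, hP00, hP01, hP10, hP11,
    Matrix.zero_kronecker, Matrix.kronecker_zero, Matrix.mul_zero, Matrix.zero_mul,
    add_zero, zero_add, blk00, blk01, blk10, blk11]
  rw [hZ1, Matrix.kronecker_add, Matrix.kronecker_smul]
  module
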